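/- Let A be a finite set, σ ∈ Δ(A), and let (x(b))_{b∈A} be [x_min, x_max]-valued random variables. Let α be an A-valued random variable with ℙ(α = b) = σ(b) for all b, independent of (x(b))_{b∈A}. Let real coefficients (A_{b,a})_{a,b∈A} and (B_{b,a})_{a,b∈A} satisfy the balance conditions A_{a,a} = Σ_{c∈A} σ(c)·A_{c,a} and B_{a,a} = Σ_{c∈A} σ(c)·B_{c,a} for all a. Define the updated vector σ' by: σ'(a) = σ(a) + (1 − σ(a))·(A_{a,a} + B_{a,a}·x(a)) on the event {α = a}, and σ'(a) = σ(a) − σ(a)·(A_{b,a} + B_{b,a}·x(b)) on the event {α = b} for b ≠ a. Then for every a ∈ A: E[σ'(a)] − σ(a) = σ(a)·Σ_{b∈A} B_{b,a}·σ(b)·( E[x(a)] − E[x(b)] ). Consequently, if B_{b,a} ≥ 0 for all a ≠ b and A* := { a ∈ A : E[x(a)] ≥ E[x(b)] for all b ∈ A } then, with P := Σ_{a∈A*} σ(a) and δ := min_{a∈A*, b∈A∖A*} B_{b,a}·( E[x(a)] − E[x(b)] ) ≥ 0, it holds that E[ Σ_{a∈A*} σ'(a) ] − P ≥ δ·P·(1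 − P). -/

import Mathlib

open MeasureTheory ProbabilityTheory Set Finset

/-- One-step expected hazard-rate bound for monotone learning rules with partial
information (Börgers–Morales–Sarin form): the chosen action `α` has law `σ` and is
independent of the payoff profile, the coefficients satisfy the balance conditions, and
the update is linear in the obtained payoff.  Then
`E[σ'(a)] − σ(a) = σ(a)·Σ_b B_{b,a}·σ(b)·(E[x(a)] − E[x(b)])` for every `a`; consequently,
if the `B`-coefficients are nonnegative off the diagonal and `A*` is the set of expected
payoff maximizing actions, then with `P = Σ_{a∈A*} σ(a)` and
`δ = min_{a∈A*, b∉A*} B_{b,a}·(E[x(a)] − E[x(b)])` one has `δ ≥ 0` and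
`E[Σ_{a∈A*} σ'(a)] − P ≥ δ·P·(1 − P)`. -/
theorem stmt11 {Ω : Type*} [MeasurableSpace Ω] {μ : Measure Ω} [IsProbabilityMeasure μ]
    {A : Type*} [Fintype A] [DecidableEq A] [MeasurableSpace A] [DiscreteMeasurableSpace A]
    (xmin xmax : ℝ) (x : A → Ω → ℝ) (hx_meas : ∀ a, Measurable (x a))
    (hx_mem : ∀ a ω, x a ω ∈ Set.Icc xmin xmax)
    (σ : A → ℝ) (hσ_nonneg : ∀ a, 0 ≤ σ a) (hσ_sum : ∑ a, σ a = 1)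
    (α : Ω → A) (hα_meas : Measurable α)
    (hα_law : ∀ b : A, μ {ω | α ω = b} = ENNReal.ofReal (σ b))
    (hα_indep : IndepFun α (fun ω => fun b => x b ω) μ)
    (Acoef Bcoef : A → A → ℝ)
    (hA_bal : ∀ a, Acoef a a = ∑ c, σ c * Acoef c a)
    (hB_bal : ∀ a, Bcoef a a = ∑ c, σ c * Bcoef c a)
    (σ' : A → Ω → ℝ)
    (hσ' : ∀ a ω, σ' a ω =
      if α ω = a then σ a + (1 - σ a) * (Acoef a a + Bcoef a a * x a ω)
      else σ a - σ a * (Acoef (α ω) a + Bcoef (α ω) a * x (α ω) ω)) :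
    (∀ a : A, (∫ ω, σ' a ω ∂μ) - σ a
        = σ a * ∑ b, Bcoef b a * σ b * ((∫ ω, x a ω ∂μ) - ∫ ω, x b ω ∂μ)) ∧
    ∀ (_ : ∀ a b : A, a ≠ b → 0 ≤ Bcoef b a)
      (Astar : Finset A)
      (_ : ∀ a : A, a ∈ Astar ↔ ∀ b : A, (∫ ω, x b ω ∂μ) ≤ ∫ ω, x a ω ∂μ)
      (hne : (Astar ×ˢ Astarᶜ).Nonempty),
      0 ≤ (Astar ×ˢ Astarᶜ).inf' hne
          (fun p => Bcoef p.2 p.1 * ((∫ ω, x p.1 ω ∂μ) - ∫ ω, x p.2 ω ∂μ)) ∧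
      (Astar ×ˢ Astarᶜ).inf' hne
          (fun p => Bcoef p.2 p.1 * ((∫ ω, x p.1 ω ∂μ) - ∫ ω, x p.2 ω ∂μ))
          * ((∑ a ∈ Astar, σ a) * (1 - ∑ a ∈ Astar, σ a))
        ≤ (∫ ω, ∑ a ∈ Astar, σ' a ω ∂μ) - ∑ a ∈ Astar, σ a := by
  classical
  set I : A → ℝ := fun b => ∫ ω, x b ω ∂μ with hI
  -- integrability of the payoffs
  have hIx : ∀ b, Integrable (x b) μ := by
    intro b
    refine ⟨(hx_meas b).aestronglyMeasurable, HasFiniteIntegral.of_bounded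
      (C := |xmin| + |xmax|) (Filter.Eventually.of_forall fun ω => ?_)⟩
    have h := hx_mem b ω
    rw [Real.norm_eq_abs, abs_le]
    constructor
    · linarith [neg_abs_le xmin, abs_nonneg xmax, h.1]
    · linarith [le_abs_self xmax, abs_nonneg xmin, h.2]
  -- key one-term integral identity
  have per : ∀ (b : A) (c₀ c₁ : ℝ),
      ∫ ω, (if α ω = b then (1:ℝ) else 0) * (c₀ + c₁ * x b ω) ∂μ
        = σ b * (c₀ + c₁ * I b) := by
    intro b c₀ c₁
    have hφ : Measurable (fun c : A => if c = b then (1:ℝ) else 0) :=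
      Measurable.of_discrete
    have hψ : Measurable (fun v : A → ℝ => c₀ + c₁ * v b) :=
      measurable_const.add (measurable_const.mul (measurable_pi_apply b))
    have hind : IndepFun (fun ω => if α ω = b then (1:ℝ) else 0)
        (fun ω => c₀ + c₁ * x b ω) μ := hα_indep.comp hφ hψ
    have hY_meas : Measurable (fun ω => if α ω = b then (1:ℝ) else 0) :=
      hφ.comp hα_meas
    have hZ_int : Integrable (fun ω => c₀ + c₁ * x b ω) μ :=
      (integrable_const c₀).add ((hIx b).const_mul c₁)
    rw [hind.integral_fun_mul_eq_mul_integral hY_meas.aestronglyMeasurable hZ_int.aestronglyMeasurable]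
    have hY : ∫ ω, (if α ω = b then (1:ℝ) else 0) ∂μ = σ b := by
      have hs : MeasurableSet (α ⁻¹' {b}) := hα_meas (measurableSet_singleton b)
      have heq : (fun ω => if α ω = b then (1:ℝ) else 0) = (α ⁻¹' {b}).indicator 1 := by
        ext ω; simp [Set.indicator_apply, Set.mem_preimage]
      rw [heq, integral_indicator_one hs,
        show α ⁻¹' {b} = {ω | α ω = b} from rfl, measureReal_def, hα_law b,
        ENNReal.toReal_ofReal (hσ_nonneg b)]
    have hZ : ∫ ω, (c₀ + c₁ * x b ω) ∂μ = c₀ + c₁ * I b := by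
      rw [integral_add (integrable_const c₀) ((hIx b).const_mul c₁),
        integral_const, integral_const_mul]
      simp [hI]
    rw [hY, hZ]
  -- coefficients of the affine update
  set c₀ : A → A → ℝ := fun a b =>
    if b = a then σ a + (1 - σ a) * Acoef a a else σ a - σ a * Acoef b a with hc₀
  set c₁ : A → A → ℝ := fun a b =>
    if b = a then (1 - σ a) * Bcoef a a else -(σ a * Bcoef b a) with hc₁
  -- pointwise decomposition of σ'
  have hpt : ∀ a ω, σ' a ω
      = ∑ b, (if α ω = b then (1:ℝ) else 0) * (c₀ a b + c₁ a b * x b ω) := by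
    intro a ω
    rw [Finset.sum_eq_single (α ω)]
    · rw [if_pos rfl, one_mul, hσ' a ω]
      by_cases h : α ω = a
      · subst h
        simp only [hc₀, hc₁, eq_self_iff_true, if_true]
        ring
      · rw [if_neg h]
        simp only [hc₀, hc₁, if_neg h]
        ring
    · intro b _ hb
      rw [if_neg (fun hh => hb hh.symm), zero_mul]
    · intro h; exact absurd (Finset.mem_univ _) h
  have hterm_int : ∀ a b, Integrable
      (fun ω => (if α ω = b then (1:ℝ) else 0) * (c₀ a b + c₁ a b * x b ω)) μ := by
    intro a b
    have hφ : Measurable (fun c : A => if c = b then (1:ℝ) else 0) :=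
      Measurable.of_discrete
    refine Integrable.bdd_mul (c := 1) ((integrable_const (c₀ a b)).add ((hIx b).const_mul (c₁ a b)))
      (hφ.comp hα_meas).aestronglyMeasurable (Filter.Eventually.of_forall fun ω => ?_)
    by_cases h : α ω = b <;> simp [h]
  have hσ'_int : ∀ a, Integrable (σ' a) μ := by
    intro a
    exact (integrable_finset_sum Finset.univ fun b _ => hterm_int a b).congr
      (Filter.Eventually.of_forall fun ω => (hpt a ω).symm)
  have key : ∀ a, ∫ ω, σ' a ω ∂μ = ∑ b, σ b * (c₀ a b + c₁ a b * I b) := by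
    intro a
    calc ∫ ω, σ' a ω ∂μ
        = ∫ ω, ∑ b, (if α ω = b then (1:ℝ) else 0) * (c₀ a b + c₁ a b * x b ω) ∂μ :=
          integral_congr_ae (Filter.Eventually.of_forall (hpt a))
      _ = ∑ b, ∫ ω, (if α ω = b then (1:ℝ) else 0) * (c₀ a b + c₁ a b * x b ω) ∂μ :=
          integral_finset_sum _ fun b _ => hterm_int a b
      _ = ∑ b, σ b * (c₀ a b + c₁ a b * I b) :=
          Finset.sum_congr rfl fun b _ => per b _ _
  -- the main identity
  have part1 : ∀ a : A, (∫ ω, σ' a ω ∂μ) - σ a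
      = σ a * ∑ b, Bcoef b a * σ b * (I a - I b) := by
    intro a
    rw [key a]
    have expand : ∑ b, σ b * (c₀ a b + c₁ a b * I b)
        = (∑ b, (σ a * σ b - σ a * (σ b * Acoef b a) - σ a * (σ b * (Bcoef b a * I b))))
          + σ a * (Acoef a a + Bcoef a a * I a) := by
      have h1 : ∀ b, σ b * (c₀ a b + c₁ a b * I b)
          = (σ a * σ b - σ a * (σ b * Acoef b a) - σ a * (σ b * (Bcoef b a * I b)))
            + (if b = a then σ a * (Acoef a a + Bcoef a a * I a) else 0) := by
        intro b
        by_cases h : b = a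
        · subst h; simp only [hc₀, hc₁, eq_self_iff_true, if_true]; ring
        · simp only [hc₀, hc₁, h, if_false]; ring
      rw [Finset.sum_congr rfl fun b _ => h1 b, Finset.sum_add_distrib,
        Finset.sum_ite_eq' Finset.univ a, if_pos (Finset.mem_univ a)]
    have hsum1 : ∑ b, σ a * σ b = σ a := by
      rw [← Finset.mul_sum, hσ_sum, mul_one]
    have hsum2 : ∑ b, σ a * (σ b * Acoef b a) = σ a * Acoef a a := by
      rw [← Finset.mul_sum, ← hA_bal a]
    have rhs_eq : ∑ b, Bcoef b a * σ b * (I a - I b)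
        = Bcoef a a * I a - ∑ b, σ b * (Bcoef b a * I b) := by
      have : ∀ b, Bcoef b a * σ b * (I a - I b)
          = σ b * Bcoef b a * I a - σ b * (Bcoef b a * I b) := fun b => by ring
      rw [Finset.sum_congr rfl fun b _ => this b, Finset.sum_sub_distrib,
        ← Finset.sum_mul]
      congr 2
      rw [hB_bal a]
    rw [expand, rhs_eq, Finset.sum_sub_distrib, Finset.sum_sub_distrib, hsum1, hsum2,
      ← Finset.mul_sum]
    ring
  constructor
  · intro a; exact part1 a
  · intro hBpos Astar hAstar hne
    set δ := (Astar ×ˢ Astarᶜ).inf' hne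
      (fun p => Bcoef p.2 p.1 * (I p.1 - I p.2)) with hδ
    set P := ∑ a ∈ Astar, σ a with hP
    have hpair : ∀ p ∈ Astar ×ˢ Astarᶜ,
        0 ≤ Bcoef p.2 p.1 * (I p.1 - I p.2) := by
      intro p hp
      rw [Finset.mem_product, Finset.mem_compl] at hp
      have hne' : p.1 ≠ p.2 := fun h => hp.2 (h ▸ hp.1)
      exact mul_nonneg (hBpos p.1 p.2 hne')
        (sub_nonneg.mpr ((hAstar p.1).1 hp.1 p.2))
    have hδ0 : 0 ≤ δ := Finset.le_inf' hne _ hpair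
    have hPc : ∑ b ∈ Astarᶜ, σ b = 1 - P := by
      have := Finset.sum_add_sum_compl Astar σ
      rw [hσ_sum] at this
      linarith
    have step : ∀ a ∈ Astar,
        δ * (σ a * (1 - P)) ≤ σ a * ∑ b, Bcoef b a * σ b * (I a - I b) := by
      intro a ha
      have hsplit : ∑ b, Bcoef b a * σ b * (I a - I b)
          = ∑ b ∈ Astar, Bcoef b a * σ b * (I a - I b)
            + ∑ b ∈ Astarᶜ, Bcoef b a * σ b * (I a - I b) :=
        (Finset.sum_add_sum_compl Astar _).symm
      have hz : ∑ b ∈ Astar, Bcoef b a * σ b * (I a - I b) = 0 := by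
        refine Finset.sum_eq_zero fun b hb => ?_
        have h1 : I b ≤ I a := (hAstar a).1 ha b
        have h2 : I a ≤ I b := (hAstar b).1 hb a
        have : I a - I b = 0 := by linarith
        rw [this, mul_zero]
      have hlow : δ * (1 - P) ≤ ∑ b ∈ Astarᶜ, Bcoef b a * σ b * (I a - I b) := by
        rw [← hPc, Finset.mul_sum]
        refine Finset.sum_le_sum fun b hb => ?_
        have hmem : (a, b) ∈ Astar ×ˢ Astarᶜ := Finset.mem_product.mpr ⟨ha, hb⟩
        have hle : δ ≤ Bcoef b a * (I a - I b) := Finset.inf'_le _ hmem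
        calc δ * σ b ≤ Bcoef b a * (I a - I b) * σ b :=
              mul_le_mul_of_nonneg_right hle (hσ_nonneg b)
          _ = Bcoef b a * σ b * (I a - I b) := by ring
      calc δ * (σ a * (1 - P)) = σ a * (δ * (1 - P)) := by ring
        _ ≤ σ a * (∑ b ∈ Astarᶜ, Bcoef b a * σ b * (I a - I b)) :=
            mul_le_mul_of_nonneg_left hlow (hσ_nonneg a)
        _ = σ a * (0 + ∑ b ∈ Astarᶜ, Bcoef b a * σ b * (I a - I b)) := by ring
        _ = σ a * ∑ b, Bcoef b a * σ b * (I a - I b) := by rw [← hz, ← hsplit]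
    refine ⟨hδ0, ?_⟩
    have hIntSum : ∫ ω, ∑ a ∈ Astar, σ' a ω ∂μ = ∑ a ∈ Astar, ∫ ω, σ' a ω ∂μ :=
      integral_finset_sum _ fun a _ => hσ'_int a
    rw [hIntSum, ← Finset.sum_sub_distrib]
    calc δ * (P * (1 - P)) = ∑ a ∈ Astar, δ * (σ a * (1 - P)) := by
          rw [← Finset.mul_sum, ← Finset.sum_mul]
      _ ≤ ∑ a ∈ Astar, σ a * ∑ b, Bcoef b a * σ b * (I a - I b) :=
          Finset.sum_le_sum step
      _ = ∑ a ∈ Astar, ((∫ ω, σ' a ω ∂μ) - σ a) :=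
          Finset.sum_congr rfl fun a _ => (part1 a).symm
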